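/- With the convention 1/∞ = 0 and in the case r < p, the dyadic norm ‖x‖_{ℓ^p_{∞,r}} satisfies ‖x‖_{ℓ^r} ≤ ‖x‖_{ℓ^p_{∞,r}} ≤ (1 − 2^{−r/p})^{−1/r} ‖x‖_{ℓ^r} for every x : ℤ → ℝ; hence ℓ^p_{∞,r}(ℤ) = ℓ^r(ℤ) with equivalent norms. -/

import Mathlib

open scoped ENNReal
open Finset Function

noncomputable section

/-- The dyadic interval `I(j,k) = [2^j k, 2^j (k+1)) ∩ ℤ`. -/
def dyadicI (j : ℕ) (k : ℤ) : Finset ℤ :=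
  Finset.Ico ((2 ^ j : ℤ) * k) ((2 ^ j : ℤ) * (k + 1))

/-- The dyadic Bourgain–Morrey norm `‖x‖_{ℓ^p_{q,r}}`. -/
def BMnorm (p q r : ℝ) (x : ℤ → ℝ) : ℝ≥0∞ :=
  (∑' jk : ℕ × ℤ,
      ((2 : ℝ≥0∞) ^ jk.1) ^ (r * (1 / q - 1 / p)) *
        (∑ l ∈ dyadicI jk.1 jk.2, ENNReal.ofReal (|x l| ^ p)) ^ (r / p)) ^ (1 / r)

/-- The classical `ℓ^r` norm of a sequence on `ℤ`. -/
def lNorm (r : ℝ) (x : ℤ → ℝ) : ℝ≥0∞ :=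
  (∑' k : ℤ, ENNReal.ofReal (|x k| ^ r)) ^ (1 / r)

end

/-- The dyadic Bourgain–Morrey norm with `q = ∞` (convention `1/∞ = 0`). -/
noncomputable def BMnormInf (p r : ℝ) (x : ℤ → ℝ) : ℝ≥0∞ :=
  (∑' jk : ℕ × ℤ,
      ((2 : ℝ≥0∞) ^ jk.1) ^ (-(r / p)) *
        (∑ l ∈ dyadicI jk.1 jk.2, ENNReal.ofReal (|x l| ^ p)) ^ (r / p)) ^ (1 / r)

lemma aux_sum_rpow_le {α : Type*} (s : Finset α) (f : α → ℝ≥0∞) {q : ℝ} (hq0 : 0 < q)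
    (hq1 : q ≤ 1) : (∑ i ∈ s, f i) ^ q ≤ ∑ i ∈ s, f i ^ q := by
  classical
  induction s using Finset.cons_induction with
  | empty => simp [ENNReal.zero_rpow_of_pos hq0]
  | cons a s ha ih =>
      rw [Finset.sum_cons, Finset.sum_cons]
      calc (f a + ∑ i ∈ s, f i) ^ q ≤ f a ^ q + (∑ i ∈ s, f i) ^ q :=
            ENNReal.rpow_add_le_add_rpow _ _ hq0.le hq1
        _ ≤ f a ^ q + ∑ i ∈ s, f i ^ q := by gcongr

lemma aux_mem_dyadicI {j : ℕ} {k l : ℤ} : l ∈ dyadicI j k ↔ k = l / 2 ^ j := by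
  have h : (0 : ℤ) < 2 ^ j := by positivity
  simp only [dyadicI, Finset.mem_Ico]
  constructor
  · rintro ⟨h1, h2⟩
    have h1' : k ≤ l / 2 ^ j := (Int.le_ediv_iff_mul_le h).2 (by linarith)
    have h2' : l / 2 ^ j < k + 1 := by
      rw [Int.ediv_lt_iff_lt_mul h]; linarith
    omega
  · rintro rfl
    refine ⟨?_, ?_⟩
    · rw [mul_comm]; exact Int.ediv_mul_le l (by positivity)
    · have := Int.lt_ediv_add_one_mul_self l h
      linarith [this]

lemma aux_tsum_dyadic (j : ℕ) (b : ℤ → ℝ≥0∞) :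
    ∑' k : ℤ, ∑ l ∈ dyadicI j k, b l = ∑' l : ℤ, b l := by
  classical
  have h1 : ∀ k : ℤ, ∑ l ∈ dyadicI j k, b l
      = ∑' l : ℤ, if l ∈ dyadicI j k then b l else 0 := by
    intro k
    rw [tsum_eq_sum (s := dyadicI j k) (f := fun l => if l ∈ dyadicI j k then b l else 0)
      (fun l hl => if_neg hl)]
    exact (Finset.sum_congr rfl fun l hl => (if_pos hl)).symm
  simp_rw [h1]
  rw [ENNReal.tsum_comm]
  refine tsum_congr fun l => ?_
  have h2 : ∀ k : ℤ, (if l ∈ dyadicI j k then b l else 0)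
      = if k = l / 2 ^ j then b l else 0 := by
    intro k; simp [aux_mem_dyadicI]
  simp_rw [h2]
  exact tsum_ite_eq (l / 2 ^ j) (fun _ => b l)

lemma aux_dyadicI_zero (k : ℤ) : dyadicI 0 k = {k} := by
  ext l; simp only [dyadicI, Finset.mem_Ico, Finset.mem_singleton]; omega

/-- For `q = ∞` and `r < p`:
`‖x‖_{ℓ^r} ≤ ‖x‖_{ℓ^p_{∞,r}} ≤ (1 - 2^{-r/p})^{-1/r} ‖x‖_{ℓ^r}`, so
`ℓ^p_{∞,r}(ℤ) = ℓ^r(ℤ)` with equivalent norms. -/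
theorem BMnormInf_equiv_lr_of_lt (p r : ℝ) (hr : 1 ≤ r) (hrp : r < p) (x : ℤ → ℝ) :
    lNorm r x ≤ BMnormInf p r x ∧
    BMnormInf p r x ≤ (1 - (2 : ℝ≥0∞) ^ (-(r / p))) ^ (-(1 / r)) * lNorm r x := by
  have hr0 : (0 : ℝ) < r := lt_of_lt_of_le zero_lt_one hr
  have hp0 : (0 : ℝ) < p := hr0.trans hrp
  have hq0 : (0 : ℝ) < r / p := div_pos hr0 hp0
  have hq1 : r / p ≤ 1 := (div_le_one hp0).2 hrp.le
  -- key pointwise identity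
  have key : ∀ l : ℤ, (ENNReal.ofReal (|x l| ^ p)) ^ (r / p) = ENNReal.ofReal (|x l| ^ r) := by
    intro l
    rw [ENNReal.ofReal_rpow_of_nonneg (Real.rpow_nonneg (abs_nonneg _) _) hq0.le,
      ← Real.rpow_mul (abs_nonneg _), mul_div_cancel₀ _ hp0.ne']
  constructor
  · -- lower bound
    unfold BMnormInf lNorm
    refine ENNReal.rpow_le_rpow ?_ (by positivity)
    rw [ENNReal.tsum_prod']
    calc ∑' k : ℤ, ENNReal.ofReal (|x k| ^ r)
        = ∑' k : ℤ, ((2 : ℝ≥0∞) ^ (0 : ℕ)) ^ (-(r / p)) *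
            (∑ l ∈ dyadicI 0 k, ENNReal.ofReal (|x l| ^ p)) ^ (r / p) := by
          refine tsum_congr fun k => ?_
          rw [aux_dyadicI_zero, Finset.sum_singleton, key, pow_zero, ENNReal.one_rpow, one_mul]
      _ ≤ _ := ENNReal.le_tsum 0
  · -- upper bound
    unfold BMnormInf lNorm
    have step1 : (∑' jk : ℕ × ℤ,
        ((2 : ℝ≥0∞) ^ jk.1) ^ (-(r / p)) *
          (∑ l ∈ dyadicI jk.1 jk.2, ENNReal.ofReal (|x l| ^ p)) ^ (r / p))
        ≤ (1 - (2 : ℝ≥0∞) ^ (-(r / p)))⁻¹ * ∑' k : ℤ, ENNReal.ofReal (|x k| ^ r) := by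
      calc ∑' jk : ℕ × ℤ,
            ((2 : ℝ≥0∞) ^ jk.1) ^ (-(r / p)) *
              (∑ l ∈ dyadicI jk.1 jk.2, ENNReal.ofReal (|x l| ^ p)) ^ (r / p)
          ≤ ∑' jk : ℕ × ℤ,
            ((2 : ℝ≥0∞) ^ jk.1) ^ (-(r / p)) *
              ∑ l ∈ dyadicI jk.1 jk.2, ENNReal.ofReal (|x l| ^ r) := by
            refine ENNReal.tsum_le_tsum fun jk => ?_
            refine mul_le_mul_right ?_ _
            calc (∑ l ∈ dyadicI jk.1 jk.2, ENNReal.ofReal (|x l| ^ p)) ^ (r / p)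
                ≤ ∑ l ∈ dyadicI jk.1 jk.2, (ENNReal.ofReal (|x l| ^ p)) ^ (r / p) :=
                  aux_sum_rpow_le _ _ hq0 hq1
              _ = ∑ l ∈ dyadicI jk.1 jk.2, ENNReal.ofReal (|x l| ^ r) :=
                  Finset.sum_congr rfl fun l _ => key l
        _ = ∑' j : ℕ, ((2 : ℝ≥0∞) ^ j) ^ (-(r / p)) *
              ∑' k : ℤ, ∑ l ∈ dyadicI j k, ENNReal.ofReal (|x l| ^ r) := by
            rw [ENNReal.tsum_prod']
            refine tsum_congr fun j => ?_
            simp only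
            exact ENNReal.tsum_mul_left
        _ = (∑' j : ℕ, ((2 : ℝ≥0∞) ^ (-(r / p))) ^ j) *
              ∑' k : ℤ, ENNReal.ofReal (|x k| ^ r) := by
            rw [← ENNReal.tsum_mul_right]
            refine tsum_congr fun j => ?_
            rw [aux_tsum_dyadic, ← ENNReal.rpow_natCast ((2 : ℝ≥0∞)) j,
              ← ENNReal.rpow_mul, mul_comm (j : ℝ), ENNReal.rpow_mul_natCast]
        _ = (1 - (2 : ℝ≥0∞) ^ (-(r / p)))⁻¹ * ∑' k : ℤ, ENNReal.ofReal (|x k| ^ r) := by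
            rw [ENNReal.tsum_geometric]
    calc (∑' jk : ℕ × ℤ,
          ((2 : ℝ≥0∞) ^ jk.1) ^ (-(r / p)) *
            (∑ l ∈ dyadicI jk.1 jk.2, ENNReal.ofReal (|x l| ^ p)) ^ (r / p)) ^ (1 / r)
        ≤ ((1 - (2 : ℝ≥0∞) ^ (-(r / p)))⁻¹ *
            ∑' k : ℤ, ENNReal.ofReal (|x k| ^ r)) ^ (1 / r) :=
          ENNReal.rpow_le_rpow step1 (by positivity)
      _ = (1 - (2 : ℝ≥0∞) ^ (-(r / p))) ^ (-(1 / r)) *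
            (∑' k : ℤ, ENNReal.ofReal (|x k| ^ r)) ^ (1 / r) := by
          rw [ENNReal.mul_rpow_of_nonneg _ _ (by positivity), ENNReal.inv_rpow,
            ← ENNReal.rpow_neg]
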